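/- For a prime p and an integer s with 0 < s < p, define 𝔉(p, s) := {p(p − 1)(p + 1)(Kp + s) : K ∈ ℕ}. Let 𝒫 be a nonempty finite family of odd primes and for each q ∈ 𝒫 let s_q satisfy 0 < s_q < q. Then the asymptotic density of ⋂_{q ∈ 𝒫} 𝔉(q, s_q) exists and equals 0 if there exist p, q ∈ 𝒫 with p² ∣ q² − 1, and equals 1/lcm{q⁴ − q² : q ∈ 𝒫} otherwise. -/

import Mathlib

/-- `𝔉(p, s) = {p(p − 1)(p + 1)(Kp + s) : K ∈ ℕ}`. -/
def FrSet (p s : ℕ) : Set ℕ := {m | ∃ K : ℕ, m = p * (p - 1) * (p + 1) * (K * p + s)}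

/-- `A ⊆ ℕ` has asymptotic density `d`. -/
def hasDensity (A : Set ℕ) (d : ℝ) : Prop :=
  Filter.Tendsto (fun N : ℕ => ((A ∩ Set.Icc 1 N).ncard : ℝ) / N) Filter.atTop (nhds d)


lemma lcm_ne_zero_aux (P : Finset ℕ) (f : ℕ → ℕ) (h : ∀ q ∈ P, f q ≠ 0) :
    P.lcm f ≠ 0 := by
  classical
  induction P using Finset.induction_on with
  | empty => simp
  | @insert a s ha ih =>
    rw [Finset.lcm_insert]
    have h1 : f a ≠ 0 := h a (Finset.mem_insert_self a s)
    have h2 : s.lcm f ≠ 0 := ih (fun q hq => h q (Finset.mem_insert_of_mem hq))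
    exact Nat.lcm_ne_zero h1 h2

lemma sq_not_dvd_lcm {p : ℕ} (hp : p.Prime) (P : Finset ℕ) (f : ℕ → ℕ)
    (h0 : ∀ q ∈ P, f q ≠ 0) (h : ∀ q ∈ P, ¬ p ^ 2 ∣ f q) : ¬ p ^ 2 ∣ P.lcm f := by
  classical
  induction P using Finset.induction_on with
  | empty =>
    simp only [Finset.lcm_empty]
    intro hd
    have h1 : p ^ 2 = 1 := Nat.dvd_one.mp hd
    have h2 : p = 1 := ((pow_eq_one_iff (n := 2)).mp h1).resolve_right (by norm_num)
    exact hp.one_lt.ne' h2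
  | @insert a s ha ih =>
    rw [Finset.lcm_insert]
    have h1 : f a ≠ 0 := h0 a (Finset.mem_insert_self a s)
    have h2 : s.lcm f ≠ 0 := lcm_ne_zero_aux s f (fun q hq => h0 q (Finset.mem_insert_of_mem hq))
    have hL : lcm (f a) (s.lcm f) = Nat.lcm (f a) (s.lcm f) := rfl
    rw [hL]
    intro hd
    have hne : Nat.lcm (f a) (s.lcm f) ≠ 0 := Nat.lcm_ne_zero h1 h2
    rw [hp.pow_dvd_iff_le_factorization hne, Nat.factorization_lcm h1 h2,
      Finsupp.sup_apply, le_sup_iff] at hd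
    rcases hd with hd | hd
    · exact h a (Finset.mem_insert_self a s) ((hp.pow_dvd_iff_le_factorization h1).mpr hd)
    · exact ih (fun q hq => h0 q (Finset.mem_insert_of_mem hq))
        (fun q hq => h q (Finset.mem_insert_of_mem hq))
        ((hp.pow_dvd_iff_le_factorization h2).mpr hd)



lemma density_mod {d a : ℕ} (hd : 0 < d) (ha : 0 < a) (had : a < d) :
    hasDensity {m | m % d = a} (1 / (d : ℝ)) := by
  have key : ∀ N : ℕ, a ≤ N →
      ({m | m % d = a} ∩ Set.Icc 1 N).ncard = (N - a) / d + 1 := by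
    intro N hN
    have hinj : Function.Injective (fun k : ℕ => a + k * d) := by
      intro i j hij
      simp only [add_right_inj] at hij
      exact Nat.eq_of_mul_eq_mul_right hd hij
    have hset : {m | m % d = a} ∩ Set.Icc 1 N =
        ↑((Finset.range ((N - a) / d + 1)).image (fun k => a + k * d)) := by
      ext m
      simp only [Set.mem_inter_iff, Set.mem_setOf_eq, Set.mem_Icc, Finset.coe_image,
        Finset.coe_range, Set.mem_image, Set.mem_Iio]
      constructor
      · rintro ⟨hm, h1, h2⟩
        set k := m / d with hk
        have h3 : d * k + a = m := by rw [← hm]; exact Nat.div_add_mod m d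
        have h3' : k * d = d * k := mul_comm _ _
        refine ⟨k, ?_, by omega⟩
        have h4 : k * d ≤ N - a := by omega
        have h5 := (Nat.le_div_iff_mul_le hd).mpr h4
        omega
      · rintro ⟨k, hk, rfl⟩
        have h4 : k * d ≤ (N - a) / d * d := Nat.mul_le_mul_right d (by omega)
        have h5 : (N - a) / d * d ≤ N - a := Nat.div_mul_le_self _ _
        refine ⟨?_, by omega, by omega⟩
        rw [Nat.add_mul_mod_self_right, Nat.mod_eq_of_lt had]
    rw [hset, Set.ncard_coe_finset, Finset.card_image_of_injective _ hinj, Finset.card_range]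
  have hc : Filter.Tendsto (fun N : ℕ => (((N - a) / d + 1 : ℕ) : ℝ) / N - 1 / d)
      Filter.atTop (nhds 0) := by
    refine squeeze_zero_norm' (a := fun N : ℕ => ((a : ℝ) + 1) / N) ?_ (tendsto_const_div_atTop_nhds_zero_nat _)
    filter_upwards [Filter.eventually_ge_atTop (max a 1)] with N hN
    have hN1 : 1 ≤ N := le_trans (le_max_right a 1) hN
    have hNa : a ≤ N := le_trans (le_max_left a 1) hN
    set q := (N - a) / d with hq
    set r := (N - a) % d with hr
    have h1 : d * q + r = N - a := Nat.div_add_mod _ _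
    have h2 : r < d := Nat.mod_lt _ hd
    have h3 : d * q + r + a = N := by omega
    have hNR : (0:ℝ) < N := by exact_mod_cast hN1
    have hdR : (0:ℝ) < d := by exact_mod_cast hd
    have h3R : (d:ℝ) * q + r + a = N := by exact_mod_cast h3
    have hrR : (0:ℝ) ≤ r := by positivity
    have hr2R : (r:ℝ) < d := by exact_mod_cast h2
    have haR : (0:ℝ) < a := by exact_mod_cast ha
    have e : ((q + 1 : ℕ) : ℝ) / N - 1 / d = ((d:ℝ) - r - a) / (N * d) := by
      push_cast
      field_simp
      ring_nf
      nlinarith [h3R]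
    rw [e, Real.norm_eq_abs, abs_div, abs_of_pos (by positivity : (0:ℝ) < (N:ℝ) * d)]
    rw [div_le_div_iff₀ (by positivity) hNR]
    have habs : |(d:ℝ) - r - a| ≤ (d:ℝ) + a := by
      rw [abs_le]
      constructor <;> nlinarith
    have hd1 : (1:ℝ) ≤ d := by exact_mod_cast hd
    nlinarith [mul_nonneg (mul_nonneg hNR.le haR.le) (sub_nonneg.mpr hd1)]
  have hc2 := hc.add_const (1 / (d:ℝ))
  rw [zero_add] at hc2
  have hc3 : Filter.Tendsto (fun N : ℕ => (((N - a) / d + 1 : ℕ) : ℝ) / N)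
      Filter.atTop (nhds (1 / (d:ℝ))) := by
    refine hc2.congr (fun N => by ring)
  unfold hasDensity
  refine hc3.congr' ?_
  filter_upwards [Filter.eventually_ge_atTop a] with N hN
  rw [key N hN]


lemma crt_aux (P : Finset ℕ) (T : ℕ) (a : ℕ → ℕ)
    (hprime : ∀ q ∈ P, Nat.Prime q)
    (hqa : ∀ q ∈ P, q ∣ a q)
    (hqT : ∀ q ∈ P, ¬ q ^ 2 ∣ T) :
    ∀ S : Finset ℕ, S ⊆ P → ∃ x : ℕ, T ∣ x ∧ ∀ q ∈ S, x ≡ a q [MOD q ^ 2] := by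
  classical
  intro S
  induction S using Finset.induction_on with
  | empty => exact fun _ => ⟨0, dvd_zero T, by simp⟩
  | @insert p S' hp ih =>
    intro hsub
    have hpP : p ∈ P := hsub (Finset.mem_insert_self p S')
    have hS'P : S' ⊆ P := fun q hq => hsub (Finset.mem_insert_of_mem hq)
    obtain ⟨x, hxT, hxS⟩ := ih hS'P
    have hpprime := hprime p hpP
    set n := T * ∏ q ∈ S', q ^ 2 with hn
    have hcop : Nat.Coprime p (∏ q ∈ S', q ^ 2) := by
      apply Nat.Coprime.prod_right
      intro q hq
      have hqprime := hprime q (hS'P hq)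
      have hpq : p ≠ q := by rintro rfl; exact hp hq
      exact Nat.Coprime.pow_right _ ((hpprime.coprime_iff_not_dvd).mpr
        (fun h => hpq ((Nat.prime_dvd_prime_iff_eq hpprime hqprime).mp h)))
    have hp2n : ¬ p ^ 2 ∣ n := by
      intro h
      exact hqT p hpP ((hcop.pow_left 2).dvd_of_dvd_mul_right h)
    have hcompat : x ≡ a p [MOD Nat.gcd n (p ^ 2)] := by
      obtain ⟨i, hi2, hie⟩ := (Nat.dvd_prime_pow hpprime).mp (Nat.gcd_dvd_right n (p ^ 2))
      interval_cases i
    -- i = 0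
      · rw [hie, pow_zero]
        exact Nat.modEq_one
    -- i = 1
      · rw [hie, pow_one]
        have hpn : p ∣ n := by
          have := Nat.gcd_dvd_left n (p ^ 2)
          rw [hie, pow_one] at this
          exact this
        have hpT : p ∣ T := hcop.dvd_of_dvd_mul_right hpn
        have h1 : x ≡ 0 [MOD p] := Nat.modEq_zero_iff_dvd.mpr (hpT.trans hxT)
        have h2 : (0:ℕ) ≡ a p [MOD p] := (Nat.modEq_zero_iff_dvd.mpr (hqa p hpP)).symm
        exact h1.trans h2
    -- i = 2
      · exfalso
        apply hp2n
        rw [← hie]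
        exact Nat.gcd_dvd_left n (p ^ 2)
    obtain ⟨y, hy1, hy2⟩ := Nat.chineseRemainder' hcompat
    refine ⟨y, ?_, ?_⟩
    · have hyx : y ≡ x [MOD T] := hy1.of_dvd (dvd_mul_right T _)
      have h0 : x ≡ 0 [MOD T] := Nat.modEq_zero_iff_dvd.mpr hxT
      exact Nat.modEq_zero_iff_dvd.mp (hyx.trans h0)
    · intro q hq
      rcases Finset.mem_insert.mp hq with rfl | hq'
      · exact hy2
      · have hdq : q ^ 2 ∣ n := by
          rw [hn]
          exact (Finset.dvd_prod_of_mem (fun q => q ^ 2) hq').trans (dvd_mul_left _ T)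
        exact (hy1.of_dvd hdq).trans (hxS q hq')



lemma frset_eq (q t : ℕ) (h3 : 3 ≤ q) (ht1 : 0 < t) (ht2 : t < q) :
    FrSet q t = {m | m % (q ^ 2 * (q ^ 2 - 1)) = q * (q ^ 2 - 1) * t} := by
  have h1q : 1 < q ^ 2 := by nlinarith
  have hB : 0 < q ^ 2 - 1 := Nat.sub_pos_of_lt h1q
  have hfact : (q - 1) * (q + 1) = q ^ 2 - 1 := by
    rcases q with _ | n
    · omega
    · have h : (n + 1) ^ 2 = n * (n + 2) + 1 := by ring
      simp only [Nat.add_sub_cancel]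
      rw [h, Nat.add_sub_cancel]
  have hkey : ∀ K, q * (q - 1) * (q + 1) * (K * q + t)
      = q ^ 2 * (q ^ 2 - 1) * K + q * (q ^ 2 - 1) * t := by
    intro K
    rw [mul_assoc q (q - 1) (q + 1), hfact]
    ring
  have hAD : q * (q ^ 2 - 1) * t < q ^ 2 * (q ^ 2 - 1) := by
    have e : q ^ 2 * (q ^ 2 - 1) = q * (q ^ 2 - 1) * q := by rw [pow_two]; ring
    rw [e]
    exact (Nat.mul_lt_mul_left (Nat.mul_pos (by omega) hB)).mpr ht2
  ext m
  simp only [FrSet, Set.mem_setOf_eq]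
  constructor
  · rintro ⟨K, rfl⟩
    rw [hkey K, Nat.mul_add_mod, Nat.mod_eq_of_lt hAD]
  · intro hm
    refine ⟨m / (q ^ 2 * (q ^ 2 - 1)), ?_⟩
    rw [hkey]
    have h := Nat.div_add_mod m (q ^ 2 * (q ^ 2 - 1))
    rw [hm] at h
    exact h.symm


lemma coprime_pred_aux (n : ℕ) (h : 1 ≤ n) : Nat.Coprime n (n - 1) := by
  rcases n with _ | k
  · omega
  · simp only [Nat.add_sub_cancel]
    rw [Nat.add_comm, Nat.coprime_add_self_left]
    exact Nat.coprime_one_left k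


theorem density_inter_FrSet (P : Finset ℕ) (hP : P.Nonempty)
    (hprime : ∀ q ∈ P, q.Prime ∧ Odd q) (s : ℕ → ℕ)
    (hs : ∀ q ∈ P, 0 < s q ∧ s q < q) :
    hasDensity (⋂ q ∈ P, FrSet q (s q))
      (if ∃ p ∈ P, ∃ q ∈ P, p ^ 2 ∣ q ^ 2 - 1 then 0
       else 1 / ((P.lcm (fun q => q ^ 4 - q ^ 2) : ℕ) : ℝ)) := by
  classical
  have hq3 : ∀ q ∈ P, 3 ≤ q := by
    intro q hq
    have h2 := (hprime q hq).1.two_le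
    have ho := Nat.odd_iff.mp (hprime q hq).2
    omega
  have h1q : ∀ q ∈ P, 1 < q ^ 2 := by
    intro q hq
    have := hq3 q hq
    nlinarith
  have hBpos : ∀ q ∈ P, 0 < q ^ 2 - 1 := fun q hq => Nat.sub_pos_of_lt (h1q q hq)
  have hDpos : ∀ q ∈ P, 0 < q ^ 2 * (q ^ 2 - 1) :=
    fun q hq => Nat.mul_pos (by have := h1q q hq; omega) (hBpos q hq)
  have hApos : ∀ q ∈ P, 0 < q * (q ^ 2 - 1) * s q :=
    fun q hq => Nat.mul_pos (Nat.mul_pos (by have := hq3 q hq; omega) (hBpos q hq)) (hs q hq).1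
  have hAD : ∀ q ∈ P, q * (q ^ 2 - 1) * s q < q ^ 2 * (q ^ 2 - 1) := by
    intro q hq
    have e : q ^ 2 * (q ^ 2 - 1) = q * (q ^ 2 - 1) * q := by rw [pow_two]; ring
    rw [e]
    exact (Nat.mul_lt_mul_left (Nat.mul_pos (by have := hq3 q hq; omega) (hBpos q hq))).mpr
      (hs q hq).2
  have hinter : (⋂ q ∈ P, FrSet q (s q)) =
      ⋂ q ∈ P, {m | m % (q ^ 2 * (q ^ 2 - 1)) = q * (q ^ 2 - 1) * s q} :=
    Set.iInter₂_congr (fun q hq => frset_eq q (s q) (hq3 q hq) (hs q hq).1 (hs q hq).2)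
  rw [hinter]
  split_ifs with hcase
  · -- density 0 : the intersection is empty
    obtain ⟨p, hpP, q, hqP, hdvd⟩ := hcase
    have hempty : (⋂ q ∈ P, {m | m % (q ^ 2 * (q ^ 2 - 1)) = q * (q ^ 2 - 1) * s q})
        = (∅ : Set ℕ) := by
      rw [Set.eq_empty_iff_forall_notMem]
      intro m hm
      simp only [Set.mem_iInter, Set.mem_setOf_eq] at hm
      have hmp := hm p hpP
      have hmq := hm q hqP
      -- q^2 - 1 divides m
      obtain ⟨k', hk'⟩ : ∃ k', m = q ^ 2 * (q ^ 2 - 1) * k' + q * (q ^ 2 - 1) * s q := by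
        refine ⟨m / (q ^ 2 * (q ^ 2 - 1)), ?_⟩
        have h := Nat.div_add_mod m (q ^ 2 * (q ^ 2 - 1))
        rw [hmq] at h
        exact h.symm
      have hq2m : (q ^ 2 - 1) ∣ m := ⟨q ^ 2 * k' + q * s q, by rw [hk']; ring⟩
      have hp2m : p ^ 2 ∣ m := hdvd.trans hq2m
      -- p^2 divides p * (p^2 - 1) * s p
      obtain ⟨k, hk⟩ : ∃ k, m = p ^ 2 * (p ^ 2 - 1) * k + p * (p ^ 2 - 1) * s p := by
        refine ⟨m / (p ^ 2 * (p ^ 2 - 1)), ?_⟩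
        have h := Nat.div_add_mod m (p ^ 2 * (p ^ 2 - 1))
        rw [hmp] at h
        exact h.symm
      have hd1 : p ^ 2 ∣ p ^ 2 * (p ^ 2 - 1) * k := ⟨(p ^ 2 - 1) * k, by ring⟩
      have hd2 : p ^ 2 ∣ p * (p ^ 2 - 1) * s p := by
        have h := Nat.dvd_sub hp2m hd1
        have e : m - p ^ 2 * (p ^ 2 - 1) * k = p * (p ^ 2 - 1) * s p := by
          rw [hk, Nat.add_sub_cancel_left]
        rwa [e] at h
      -- contradiction
      have hd3 : p ∣ (p ^ 2 - 1) * s p := by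
        refine (Nat.mul_dvd_mul_iff_left (by have := hq3 p hpP; omega : 0 < p)).mp ?_
        rw [← mul_assoc, show p * p = p ^ 2 from (pow_two p).symm]
        exact hd2
      have hpprime := (hprime p hpP).1
      rcases hpprime.dvd_mul.mp hd3 with h | h
      · have hpp2 : p ∣ p ^ 2 := dvd_pow_self p two_ne_zero
        have h1 : p ∣ p ^ 2 - (p ^ 2 - 1) := Nat.dvd_sub hpp2 h
        rw [Nat.sub_sub_self (by have := h1q p hpP; omega : 1 ≤ p ^ 2)] at h1
        have := Nat.le_of_dvd one_pos h1
        have := hq3 p hpP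
        omega
      · have := Nat.le_of_dvd (hs p hpP).1 h
        have := (hs p hpP).2
        omega
    rw [hempty]
    unfold hasDensity
    simp only [Set.empty_inter, Set.ncard_empty, Nat.cast_zero, zero_div]
    exact tendsto_const_nhds
  · -- positive density
    push_neg at hcase
    set T := P.lcm (fun q => q ^ 2 - 1) with hT
    have hT0 : T ≠ 0 := lcm_ne_zero_aux P _ (fun q hq => by have := hBpos q hq; omega)
    have hqT : ∀ q ∈ P, ¬ q ^ 2 ∣ T :=
      fun q hq => sq_not_dvd_lcm (hprime q hq).1 P _
        (fun r hr => by have := hBpos r hr; omega)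
        (fun r hr => hcase q hq r hr)
    obtain ⟨x, hxT, hxS⟩ := crt_aux P T (fun q => q * (q ^ 2 - 1) * s q)
      (fun q hq => (hprime q hq).1)
      (fun q hq => ⟨(q ^ 2 - 1) * s q, by ring⟩)
      hqT P subset_rfl
    have hxmod : ∀ q ∈ P, x ≡ q * (q ^ 2 - 1) * s q [MOD q ^ 2 * (q ^ 2 - 1)] := by
      intro q hq
      have hco : Nat.Coprime (q ^ 2) (q ^ 2 - 1) :=
        coprime_pred_aux _ (by have := h1q q hq; omega)
      refine (Nat.modEq_and_modEq_iff_modEq_mul hco).mp ⟨hxS q hq, ?_⟩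
      have h1 : (q ^ 2 - 1) ∣ x := (Finset.dvd_lcm (f := fun q => q ^ 2 - 1) hq).trans hxT
      have h2 : (q ^ 2 - 1) ∣ q * (q ^ 2 - 1) * s q := ⟨q * s q, by ring⟩
      exact (Nat.modEq_zero_iff_dvd.mpr h1).trans (Nat.modEq_zero_iff_dvd.mpr h2).symm
    set L := P.lcm (fun q => q ^ 2 * (q ^ 2 - 1)) with hL
    have hLf : P.lcm (fun q => q ^ 4 - q ^ 2) = L := by
      refine Finset.lcm_congr rfl (fun q hq => ?_)
      have h1 : 1 ≤ q ^ 2 := by have := h1q q hq; omega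
      have h2 : q ^ 2 ≤ q ^ 4 := Nat.pow_le_pow_right (by have := hq3 q hq; omega) (by norm_num)
      zify [h1, h2]
      ring
    have hL0 : L ≠ 0 := lcm_ne_zero_aux P _ (fun q hq => (hDpos q hq).ne')
    have hLpos : 0 < L := Nat.pos_of_ne_zero hL0
    have hbL : x % L < L := Nat.mod_lt _ hLpos
    have hb0 : 0 < x % L := by
      rcases hP with ⟨q0, hq0⟩
      rcases Nat.eq_zero_or_pos (x % L) with h | h
      swap
      · exact h
      exfalso
      have hLx : L ∣ x := Nat.dvd_of_mod_eq_zero h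
      have hDx : (q0 ^ 2 * (q0 ^ 2 - 1)) ∣ x := (Finset.dvd_lcm (f := fun q => q ^ 2 * (q ^ 2 - 1)) hq0).trans hLx
      have hDa : (q0 ^ 2 * (q0 ^ 2 - 1)) ∣ q0 * (q0 ^ 2 - 1) * s q0 :=
        Nat.modEq_zero_iff_dvd.mp ((hxmod q0 hq0).symm.trans (Nat.modEq_zero_iff_dvd.mpr hDx))
      have := Nat.le_of_dvd (hApos q0 hq0) hDa
      exact absurd this (not_le.mpr (hAD q0 hq0))
    have hset : (⋂ q ∈ P, {m | m % (q ^ 2 * (q ^ 2 - 1)) = q * (q ^ 2 - 1) * s q})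
        = {m | m % L = x % L} := by
      ext m
      simp only [Set.mem_iInter, Set.mem_setOf_eq]
      constructor
      · intro hm
        have hmq : ∀ q ∈ P, m ≡ x [MOD q ^ 2 * (q ^ 2 - 1)] := by
          intro q hq
          have h1 : m ≡ q * (q ^ 2 - 1) * s q [MOD q ^ 2 * (q ^ 2 - 1)] := by
            show m % _ = _ % _
            rw [hm q hq, Nat.mod_eq_of_lt (hAD q hq)]
          exact h1.trans (hxmod q hq).symm
        have hdvd : (L : ℤ) ∣ (x : ℤ) - (m : ℤ) := by
          rw [Int.natCast_dvd]
          refine Finset.lcm_dvd (fun q hq => ?_)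
          rw [← Int.natCast_dvd]
          exact Nat.modEq_iff_dvd.mp (hmq q hq)
        exact Nat.modEq_iff_dvd.mpr hdvd
      · intro hm q hq
        have h1 : m ≡ x [MOD q ^ 2 * (q ^ 2 - 1)] :=
          Nat.ModEq.of_dvd (Finset.dvd_lcm (f := fun q => q ^ 2 * (q ^ 2 - 1)) hq) hm
        have h2 := h1.trans (hxmod q hq)
        show m % _ = _
        rw [h2]
        exact Nat.mod_eq_of_lt (hAD q hq)
    rw [hset, hLf]
    exact density_mod hLpos hb0 hbL
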